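/- arXiv:1507.00847 — 2 statements merged into one kernel-verified Lean document; each statement's English description precedes it below -/
import Mathlib

section
/- Let g be a symmetric bilinear form on ℝⁿ of Lorentzian signature (+,−,...,−) with matrix G in the standard basis, and let t ∈ ℝⁿ satisfy g(t,t) = 1. Define g⁺(v,w) := 2·g(t,v)·g(t,w) − g(v,w) with matrix G⁺. Then det(G⁺) = |det(G)| = (−1)^{n+1} · det(G). -/
open Matrix

/-- For a Lorentzian symmetric bilinear form with matrix G (congruent to
η = diag(1,−1,...,−1)) and t with g(t,t)=1, the matrix G⁺ of
g⁺(v,w) = 2 g(t,v) g(t,w) − g(v,w), i.e. G⁺ᵢⱼ = 2 tᵢ tⱼ − Gᵢⱼ with tᵢ = (G t)ᵢ,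
satisfies det(G⁺) = |det G| = (−1)^{n+1} det G. -/
theorem stmt_2 {n : ℕ} (G : Matrix (Fin n) (Fin n) ℝ) (hsym : G.IsSymm)
    (P : Matrix (Fin n) (Fin n) ℝ) (hP : IsUnit P.det)
    (hcong : P.transpose * G * P =
      Matrix.of fun i j : Fin n =>
        if i = j then (if (i : ℕ) = 0 then (1 : ℝ) else -1) else 0)
    (t : Fin n → ℝ) (ht : t ⬝ᵥ G.mulVec t = 1) :
    (Matrix.of fun i j : Fin n =>
        2 * G.mulVec t i * G.mulVec t j - G i j).det = |G.det| ∧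
    |G.det| = (-1 : ℝ) ^ (n + 1) * G.det := by
  -- n must be positive
  obtain ⟨m, rfl⟩ : ∃ m, n = m + 1 := by
    cases n with
    | zero => simp [dotProduct] at ht
    | succ m => exact ⟨m, rfl⟩
  set u := G.mulVec t with hu
  -- sign of det G from the congruence
  have hdetη : (Matrix.of fun i j : Fin (m+1) =>
      if i = j then (if (i : ℕ) = 0 then (1 : ℝ) else -1) else 0).det = (-1 : ℝ) ^ m := by
    have : (Matrix.of fun i j : Fin (m+1) =>
        if i = j then (if (i : ℕ) = 0 then (1 : ℝ) else -1) else 0) =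
        Matrix.diagonal (fun i : Fin (m+1) => if (i : ℕ) = 0 then (1:ℝ) else -1) := by
      ext i j
      by_cases h : i = j <;> simp [Matrix.diagonal, h]
    rw [this, Matrix.det_diagonal, Fin.prod_univ_succ]
    simp
  have hdet := congrArg Matrix.det hcong
  rw [Matrix.det_mul, Matrix.det_mul, Matrix.det_transpose, hdetη] at hdet
  have hp : P.det ≠ 0 := hP.ne_zero
  have hGd : G.det = (-1:ℝ)^m / (P.det)^2 := by
    field_simp
    rw [sq]
    linarith [hdet]
  have hpos : (0:ℝ) < (-1:ℝ)^(m+1+1) * G.det := by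
    rw [hGd, pow_succ, pow_succ]
    have : (-1:ℝ)^m * -1 * -1 * ((-1:ℝ)^m / P.det ^ 2) = ((-1:ℝ)^m)^2 / P.det^2 := by
      ring
    rw [this]
    positivity
  have h2 : |G.det| = (-1:ℝ)^(m+1+1) * G.det := by
    have h := abs_of_pos hpos
    rwa [abs_mul, abs_pow, abs_neg, abs_one, one_pow, one_mul] at h
  refine ⟨?_, h2⟩
  -- factorization G⁺ = G * ((-1) • (1 + col ((-2)•t) * row u))
  have hfac : (Matrix.of fun i j : Fin (m+1) => 2 * u i * u j - G i j) =
      G * ((-1 : ℝ) • (1 + Matrix.replicateCol Unit ((-2 : ℝ) • t) * Matrix.replicateRow Unit u)) := by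
    rw [Matrix.mul_smul, Matrix.mul_add, Matrix.mul_one, ← Matrix.mul_assoc,
      ← Matrix.replicateCol_mulVec, Matrix.mulVec_smul]
    ext i j
    simp only [Matrix.smul_apply, Matrix.add_apply, Matrix.of_apply, Matrix.mul_apply,
      Matrix.replicateCol_apply, Matrix.replicateRow_apply, Finset.univ_unique, Finset.sum_singleton,
      Pi.smul_apply, smul_eq_mul]
    ring
  rw [hfac, Matrix.det_mul, Matrix.det_smul, Matrix.det_one_add_replicateCol_mul_replicateRow]
  have hut : u ⬝ᵥ ((-2 : ℝ) • t) = -2 := by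
    rw [dotProduct_smul, dotProduct_comm, ht]
    norm_num
  rw [hut, h2]
  simp [Fintype.card_fin]
  ring
end

section
/- Let g be a symmetric bilinear form on ℝⁿ of Lorentzian signature (+,−,...,−) with matrix G, and t ∈ ℝⁿ with g(t,t) = 1. Then the Lebesgue volume of the ellipsoid E^t = {y ∈ ℝⁿ : 2·g(t,y)² − g(y,y) ≤ 1} equals Vol(𝔹)/√(|det G|), where 𝔹 is the Euclidean unit ball. -/
set_option maxHeartbeats 1000000
open Matrix

open MeasureTheory

/-- For a Lorentzian symmetric bilinear form with matrix G and t with g(t,t)=1,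
the ellipsoid Eᵗ = {y : 2 g(t,y)² − g(y,y) ≤ 1} has Lebesgue volume
Vol(𝔹)/√|det G|. -/
theorem stmt_4 {n : ℕ} (G : Matrix (Fin n) (Fin n) ℝ) (hsym : G.IsSymm)
    (P : Matrix (Fin n) (Fin n) ℝ) (hP : IsUnit P.det)
    (hcong : P.transpose * G * P =
      Matrix.of fun i j : Fin n =>
        if i = j then (if (i : ℕ) = 0 then (1 : ℝ) else -1) else 0)
    (t : Fin n → ℝ) (ht : t ⬝ᵥ G.mulVec t = 1) :
    volume {y : Fin n → ℝ | 2 * (t ⬝ᵥ G.mulVec y) ^ 2 - y ⬝ᵥ G.mulVec y ≤ 1}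
      = volume {y : Fin n → ℝ | ∑ i, (y i) ^ 2 ≤ 1}
        / ENNReal.ofReal (Real.sqrt |G.det|) := by
  rcases Nat.eq_zero_or_pos n with hn | hn
  · exfalso; subst hn; simp [dotProduct] at ht
  set D : Matrix (Fin n) (Fin n) ℝ := Matrix.of fun i j : Fin n =>
        if i = j then (if (i : ℕ) = 0 then (1 : ℝ) else -1) else 0 with hD
  have hGsymm : Gᵀ = G := hsym
  have hDdiag : D = Matrix.diagonal (fun i : Fin n => if (i : ℕ) = 0 then (1:ℝ) else -1) := by
    ext i j
    by_cases h : i = j <;> simp [hD, Matrix.diagonal, h]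
  have hDdet : D.det ≠ 0 := by
    rw [hDdiag, Matrix.det_diagonal]
    refine Finset.prod_ne_zero_iff.2 fun i _ => ?_
    split <;> norm_num
  have hGdet : G.det ≠ 0 := by
    have h := congrArg Matrix.det hcong
    rw [Matrix.det_mul, Matrix.det_mul, Matrix.det_transpose] at h
    intro h0
    rw [h0] at h
    simp at h
    exact hDdet h.symm
  have hGunit : IsUnit G.det := (Ne.isUnit hGdet)
  set Gt : Fin n → ℝ := G.mulVec t with hGt
  set Gp : Matrix (Fin n) (Fin n) ℝ :=
    Matrix.of (fun i j => 2 * Gt i * Gt j - G i j) with hGp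
  have htG : ∀ y : Fin n → ℝ, t ⬝ᵥ G.mulVec y = Gt ⬝ᵥ y := by
    intro y
    rw [dotProduct_mulVec]
    congr 1
    rw [← mulVec_transpose, hGsymm]
  have key : ∀ y : Fin n → ℝ,
      y ⬝ᵥ Gp.mulVec y = 2 * (t ⬝ᵥ G.mulVec y) ^ 2 - y ⬝ᵥ G.mulVec y := by
    intro y
    rw [htG]
    simp only [hGp, Matrix.mulVec, dotProduct, Matrix.of_apply]
    rw [Finset.sum_congr rfl (fun i _ => by
      rw [show (∑ j, (2 * Gt i * Gt j - G i j) * y j)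
          = 2 * Gt i * (∑ j, Gt j * y j) - (∑ j, G i j * y j) by
        rw [Finset.mul_sum, ← Finset.sum_sub_distrib]; congr 1; ext j; ring])]
    simp only [mul_sub, Finset.sum_sub_distrib]
    rw [show (∑ i, y i * (2 * Gt i * (∑ j, Gt j * y j)))
        = 2 * (∑ i, Gt i * y i) * (∑ j, Gt j * y j) from by
      calc ∑ i, y i * (2 * Gt i * (∑ j, Gt j * y j))
          = ∑ i, (Gt i * y i) * (2 * (∑ j, Gt j * y j)) := by
            apply Finset.sum_congr rfl; intro i _; ring
        _ = (∑ i, Gt i * y i) * (2 * (∑ j, Gt j * y j)) := by rw [← Finset.sum_mul]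
        _ = 2 * (∑ i, Gt i * y i) * (∑ j, Gt j * y j) := by ring]
    ring
  -- congruence transport
  have hquadPD : ∀ a b : Fin n → ℝ, (P.mulVec a) ⬝ᵥ G.mulVec (P.mulVec b) = a ⬝ᵥ D.mulVec b := by
    intro a b
    calc (P.mulVec a) ⬝ᵥ (G.mulVec (P.mulVec b))
        = (G.mulVec (P.mulVec b)) ⬝ᵥ (P.mulVec a) := dotProduct_comm _ _
      _ = ((G.mulVec (P.mulVec b)) ᵥ* P) ⬝ᵥ a := dotProduct_mulVec _ _ _
      _ = a ⬝ᵥ ((G.mulVec (P.mulVec b)) ᵥ* P) := dotProduct_comm _ _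
      _ = a ⬝ᵥ D.mulVec b := by
          rw [← mulVec_transpose, Matrix.mulVec_mulVec, Matrix.mulVec_mulVec, hcong]
  set i0 : Fin n := ⟨0, hn⟩ with hi0
  set T : Finset (Fin n) := Finset.univ.erase i0 with hT
  have hDapp : ∀ a b : Fin n → ℝ,
      a ⬝ᵥ D.mulVec b = a i0 * b i0 - ∑ i ∈ T, a i * b i := by
    intro a b
    have h1 : a ⬝ᵥ D.mulVec b
        = ∑ i : Fin n, (if (i : ℕ) = 0 then (1:ℝ) else -1) * (a i * b i) := by
      rw [hDdiag]
      simp only [dotProduct, Matrix.mulVec_diagonal]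
      apply Finset.sum_congr rfl
      intro i _
      ring
    rw [h1, ← Finset.add_sum_erase _ _ (Finset.mem_univ i0)]
    have h2 : ∑ i ∈ T, (if ((i : Fin n) : ℕ) = 0 then (1:ℝ) else -1) * (a i * b i)
        = - ∑ i ∈ T, a i * b i := by
      rw [← Finset.sum_neg_distrib]
      apply Finset.sum_congr rfl
      intro i hiT
      have hne : i ≠ i0 := Finset.ne_of_mem_erase hiT
      have : (i : ℕ) ≠ 0 := fun h => hne (Fin.ext h)
      rw [if_neg this]; ring
    rw [h2, if_pos rfl]
    ring
  -- positive definiteness of Gp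
  have hGpPD : Gp.PosDef := by
    refine Matrix.PosDef.of_dotProduct_mulVec_pos ?_ ?_
    · ext i j
      simp only [conjTranspose_apply, hGp, Matrix.of_apply, star_trivial]
      have hGji : G j i = G i j := congrFun (congrFun hGsymm i) j
      rw [hGji]; ring
    · intro x hx
      have hsx : star x = x := by
        funext i; exact star_trivial _
      rw [hsx, key x, htG x]
      set u := P⁻¹.mulVec x with hu
      have hxu : x = P.mulVec u := by
        rw [hu, Matrix.mulVec_mulVec, Matrix.mul_nonsing_inv P hP, one_mulVec]
      have hune : u ≠ 0 := by
        intro h; apply hx; rw [hxu, h, Matrix.mulVec_zero]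
      set s := P⁻¹.mulVec t with hs
      have hts : t = P.mulVec s := by
        rw [hs, Matrix.mulVec_mulVec, Matrix.mul_nonsing_inv P hP, one_mulVec]
      have h1 : s ⬝ᵥ D.mulVec s = 1 := by
        rw [← hquadPD, ← hts]; exact ht
      have h2 : Gt ⬝ᵥ x = s ⬝ᵥ D.mulVec u := by
        rw [← htG, hxu, hts, hquadPD]
      have h3 : x ⬝ᵥ G.mulVec x = u ⬝ᵥ D.mulVec u := by
        rw [hxu, hquadPD]
      rw [h2, h3, hDapp s u, hDapp u u]
      rw [hDapp s s] at h1
      set s0 := s i0 with hs0def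
      set u0 := u i0 with hu0def
      set σ := ∑ i ∈ T, s i * s i with hσdef
      set b := ∑ i ∈ T, u i * u i with hbdef
      set c := ∑ i ∈ T, s i * u i with hcdef
      have hσ : 0 ≤ σ := Finset.sum_nonneg fun i _ => mul_self_nonneg _
      have hb : 0 ≤ b := Finset.sum_nonneg fun i _ => mul_self_nonneg _
      have hcs : c ^ 2 ≤ σ * b := by
        calc c ^ 2 = (∑ i ∈ T, s i * u i) ^ 2 := by rw [hcdef]
          _ ≤ (∑ i ∈ T, s i ^ 2) * ∑ i ∈ T, u i ^ 2 :=
              Finset.sum_mul_sq_le_sq_mul_sq T (fun i => s i) (fun i => u i)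
          _ = σ * b := by
              rw [hσdef, hbdef]
              congr 1 <;> exact Finset.sum_congr rfl fun i _ => (sq _)
      have hdisj : u0 ≠ 0 ∨ 0 < b := by
        by_contra h
        push_neg at h
        obtain ⟨h0, hble⟩ := h
        have hb0 : b = 0 := le_antisymm hble hb
        have hz : ∀ i ∈ T, u i = 0 := by
          intro i hi
          have := (Finset.sum_eq_zero_iff_of_nonneg
            (fun i _ => mul_self_nonneg (u i))).1 hb0 i hi
          exact mul_self_eq_zero.1 this
        apply hune
        funext i
        by_cases hii : i = i0
        · rw [hii]; exact h0
        · exact hz i (Finset.mem_erase.2 ⟨hii, Finset.mem_univ i⟩)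
      set a : ℝ := s0 * u0 - c with hadef
      have hu0sq : (1 + σ) * (u0 * u0) = (a + c) ^ 2 := by
        have hac : a + c = s0 * u0 := by rw [hadef]; ring
        have hss : (1 + σ) = s0 * s0 := by linarith
        rw [hac, hss]; ring
      show 0 < 2 * a ^ 2 - (u0 * u0 - b)
      rcases hdisj with hu0 | hbpos
      · rcases eq_or_lt_of_le hb with hb0 | hbpos
        · have hc2 : c ^ 2 = 0 := le_antisymm (by nlinarith) (sq_nonneg c)
          have hc0 : c = 0 := by
            have := sq_eq_zero_iff.mp hc2
            exact this
          have h2u : 0 < u0 * u0 := mul_self_pos.2 hu0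
          rw [← hb0]
          rw [hc0] at hu0sq
          nlinarith [hu0sq, h2u, hσ]
        · have hK : (0:ℝ) < (1 + σ) * (1 + 2 * σ) := by nlinarith
          nlinarith [sq_nonneg ((1 + 2 * σ) * a - c), hK, mul_pos hbpos hK, hcs, hσ, hbpos, hu0sq]
      · have hK : (0:ℝ) < (1 + σ) * (1 + 2 * σ) := by nlinarith
        nlinarith [sq_nonneg ((1 + 2 * σ) * a - c), hK, mul_pos hbpos hK, hcs, hσ, hbpos, hu0sq]
  have hGppos : 0 < Gp.det := hGpPD.det_pos
  -- determinant of Gp via the matrix determinant lemma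
  have hGpdet : Gp.det = |G.det| := by
    have hrepr : Gp = (-G) + replicateCol Unit (fun i => 2 * Gt i) * replicateRow Unit Gt := by
      ext i j
      simp [hGp, Matrix.mul_apply, Matrix.replicateCol, Matrix.replicateRow]
      ring
    have hnegdet : IsUnit (-G).det := by
      rw [Matrix.det_neg]
      exact ((isUnit_one.neg).pow _).mul hGunit
    have hinv : (-G)⁻¹ = -(G⁻¹) := by
      apply Matrix.inv_eq_right_inv
      rw [Matrix.neg_mul, Matrix.mul_neg, neg_neg, Matrix.mul_nonsing_inv G hGunit]
    have hvec : Gt ᵥ* (-G)⁻¹ = -t := by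
      rw [hinv, vecMul_neg]
      congr 1
      rw [← mulVec_transpose, transpose_nonsing_inv, hGsymm, hGt, Matrix.mulVec_mulVec,
        Matrix.nonsing_inv_mul G hGunit, one_mulVec]
    have hdot : (Gt ᵥ* (-G)⁻¹) ⬝ᵥ (fun i => 2 * Gt i) = -2 := by
      rw [hvec]
      have h2 : (-t) ⬝ᵥ (fun i => 2 * Gt i) = -(2 * (t ⬝ᵥ Gt)) := by
        simp only [dotProduct, Pi.neg_apply]
        rw [Finset.mul_sum, ← Finset.sum_neg_distrib]
        apply Finset.sum_congr rfl
        intro i _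
        ring
      rw [h2, ht]; norm_num
    have hstep : Gp.det = (-G).det * (-1) := by
      rw [hrepr, Matrix.det_add_replicateCol_mul_replicateRow hnegdet]
      congr 1
      rw [← Matrix.replicateRow_vecMul, Matrix.det_unique]
      simp only [Matrix.add_apply, Matrix.one_apply_eq, Matrix.replicateRow_mul_replicateCol_apply]
      rw [hdot]
      norm_num
    have habs : |Gp.det| = |G.det| := by
      rw [hstep, Matrix.det_neg, abs_mul, abs_mul, abs_pow]
      simp
    rw [← abs_of_pos hGppos, habs]
  -- square root
  have hPSD := hGpPD.posSemidef
  set A := (open scoped MatrixOrder in CFC.sqrt Gp) with hA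
  have hAmul : A * A = Gp := by
    open scoped MatrixOrder in exact CFC.sqrt_mul_sqrt_self Gp hPSD.nonneg
  have hAherm : Aᵀ = A := by
    open scoped MatrixOrder in
    have h := (CFC.sqrt_nonneg Gp).isSelfAdjoint
    rw [← conjTranspose_eq_transpose_of_trivial]; exact h
  have hAdet2 : A.det * A.det = Gp.det := by
    rw [← Matrix.det_mul, hAmul]
  have hAdet0 : A.det ≠ 0 := by
    intro h; rw [h, mul_zero] at hAdet2; exact absurd hAdet2.symm (ne_of_gt hGppos)
  have hAabs : |A.det| = Real.sqrt |G.det| := by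
    rw [← hGpdet, ← hAdet2, ← sq, Real.sqrt_sq_eq_abs]
  have hquadA : ∀ y : Fin n → ℝ, y ⬝ᵥ Gp.mulVec y = ∑ i, (A.mulVec y i) ^ 2 := by
    intro y
    rw [← hAmul, ← Matrix.mulVec_mulVec, dotProduct_mulVec, ← mulVec_transpose, hAherm]
    simp [dotProduct, sq]
  have hset : {y : Fin n → ℝ | 2 * (t ⬝ᵥ G.mulVec y) ^ 2 - y ⬝ᵥ G.mulVec y ≤ 1}
      = (Matrix.toLin' A) ⁻¹' {x : Fin n → ℝ | ∑ i, (x i) ^ 2 ≤ 1} := by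
    ext y
    simp only [Set.mem_setOf_eq, Set.mem_preimage, Matrix.toLin'_apply]
    rw [← key y, hquadA y]
  rw [hset]
  have hdetlin : LinearMap.det (Matrix.toLin' A) = A.det := LinearMap.det_toLin' A
  rw [MeasureTheory.Measure.addHaar_preimage_linearMap volume (by rw [hdetlin]; exact hAdet0)]
  rw [hdetlin, abs_inv, hAabs]
  rw [ENNReal.ofReal_inv_of_pos (by positivity : (0:ℝ) < Real.sqrt |G.det|)]
  rw [mul_comm]
  exact (div_eq_mul_inv _ _).symm
end
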